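/- Let K be a field of characteristic 0, A = K[t₁,…,t_d], D^# the ring of logarithmic differential operators generated over A by θ_i = t_i∂_i for i ≤ s and ∂_i for i > s. Let A(Z) := (1/(t₁⋯t_s))·A ⊂ K[t,∏t_i^{−1}] with its natural D^#-module structure. Then the map D^# → A(Z), P ↦ P·(1/(t₁⋯t_s)), is surjective with kernel the left ideal generated by ᵗθ₁, …, ᵗθ_s, ∂_{s+1}, …, ∂_d, where ᵗθ_i = −∂_i t_i = −θ_i − 1; i.e. D^#/D^#·(θ₁+1, …, θ_s+1, ∂_{s+1}, …, ∂_d) ≅ A(Z) as left D^#-modules. -/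

import Mathlib

open MvPolynomial

noncomputable section

variable (K : Type*) [Field K] (d : ℕ)

/-- The ring `K[t₁^{±1},…,t_d^{±1}]` of Laurent polynomials in `d` variables,
in which `A = K[t₁,…,t_d]` and all localizations `A[1/(t_{i₁}⋯t_{i_r})]` embed. -/
abbrev MvLaurent := AddMonoidAlgebra K (Fin d → ℤ)

/-- Multiplication by `t_i` on `K[t₁^{±1},…,t_d^{±1}]`. -/
def mvT (i : Fin d) : Module.End K (MvLaurent K d) :=
  LinearMap.mulLeft K (AddMonoidAlgebra.single (Pi.single i 1) (1 : K))

/-- The embedding `K[t₁,…,t_d] → K[t₁^{±1},…,t_d^{±1}]`. -/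
def mvEmbed : MvPolynomial (Fin d) K →ₐ[K] MvLaurent K d :=
  MvPolynomial.aeval fun i => AddMonoidAlgebra.single (Pi.single i 1) (1 : K)

/-- The exponent of the monomial `1/(t₁⋯t_s)`. -/
def poleExp (s : ℕ) : Fin d → ℤ := fun i => if (i : ℕ) < s then -1 else 0

end

noncomputable section Aux

variable {K : Type*} [Field K] {d : ℕ}

lemma lmul_eq_mulLeft (x : MvLaurent K d) :
    Algebra.lmul K (MvLaurent K d) x = LinearMap.mulLeft K x := by
  ext y
  simp [Algebra.coe_lmul_eq_mul, LinearMap.mul_apply', LinearMap.mulLeft_apply]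

/-- Left multiplication by an embedded polynomial, as an operator. -/
def Lop (K : Type*) [Field K] (d : ℕ) :
    MvPolynomial (Fin d) K →ₐ[K] Module.End K (MvLaurent K d) :=
  (Algebra.lmul K (MvLaurent K d)).comp (mvEmbed K d)

lemma Lop_apply (p : MvPolynomial (Fin d) K) (x : MvLaurent K d) :
    Lop K d p x = mvEmbed K d p * x := by
  simp [Lop, Algebra.coe_lmul_eq_mul, LinearMap.mul_apply']

lemma mvEmbed_X (j : Fin d) :
    mvEmbed K d (X j) = AddMonoidAlgebra.single (Pi.single j 1) (1 : K) := by
  rw [mvEmbed, aeval_X]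

lemma Lop_X (j : Fin d) : Lop K d (X j) = mvT K d j := by
  rw [Lop, AlgHom.comp_apply, mvEmbed_X, lmul_eq_mulLeft, mvT]

lemma Lop_mem (T : Set (Module.End K (MvLaurent K d))) (p : MvPolynomial (Fin d) K) :
    Lop K d p ∈ Algebra.adjoin K (Set.range (mvT K d) ∪ T) := by
  induction p using MvPolynomial.induction_on with
  | C r =>
    rw [← MvPolynomial.algebraMap_eq, AlgHom.commutes]
    exact Subalgebra.algebraMap_mem _ r
  | add p q hp hq => rw [map_add]; exact add_mem hp hq
  | mul_X p j hp =>
    rw [map_mul, Lop_X]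
    exact mul_mem hp (Algebra.subset_adjoin (Set.mem_union_left _ ⟨j, rfl⟩))

section withD

variable (dMv : Fin d → Module.End K (MvLaurent K d))
  (hdMv : ∀ (i : Fin d) (m : Fin d → ℤ),
      dMv i (AddMonoidAlgebra.single m (1 : K)) =
        (m i : K) • AddMonoidAlgebra.single (m - Pi.single i 1) (1 : K))

include hdMv

lemma dMv_single (j : Fin d) (m : Fin d → ℤ) (c : K) :
    dMv j (AddMonoidAlgebra.single m c) =
      (m j : K) • AddMonoidAlgebra.single (m - Pi.single j 1) c := by
  have h : (AddMonoidAlgebra.single m c : MvLaurent K d)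
      = c • AddMonoidAlgebra.single m 1 := by
    rw [AddMonoidAlgebra.smul_single', mul_one]
  rw [h, map_smul, hdMv, smul_comm, AddMonoidAlgebra.smul_single', mul_one]

omit hdMv in
lemma mvT_single (j : Fin d) (m : Fin d → ℤ) (c : K) :
    mvT K d j (AddMonoidAlgebra.single m c) =
      AddMonoidAlgebra.single (Pi.single j 1 + m) c := by
  rw [mvT, LinearMap.mulLeft_apply, AddMonoidAlgebra.single_mul_single, one_mul]

omit hdMv in
lemma leibniz_aux (D : Module.End K (MvLaurent K d))
    (h : ∀ (n m : Fin d → ℤ) (a b : K),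
      D (AddMonoidAlgebra.single n a * AddMonoidAlgebra.single m b) =
        D (AddMonoidAlgebra.single n a) * AddMonoidAlgebra.single m b +
          AddMonoidAlgebra.single n a * D (AddMonoidAlgebra.single m b))
    (x y : MvLaurent K d) : D (x * y) = D x * y + x * D y := by
  induction x using AddMonoidAlgebra.induction_linear with
  | zero => simp
  | add f g hf hg => simp only [add_mul, map_add, hf, hg]; abel
  | single n a =>
    induction y using AddMonoidAlgebra.induction_linear with
    | zero => simp
    | add f g hf hg => simp only [mul_add, map_add, hf, hg]; abel
    | single m b => exact h n m a b

omit hdMv in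
lemma cast_add_apply (n m : Fin d → ℤ) (j : Fin d) :
    (((n + m) j : ℤ) : K) = ((n j : ℤ) : K) + ((m j : ℤ) : K) := by
  push_cast [Pi.add_apply]
  ring

lemma leibniz_d (j : Fin d) (x y : MvLaurent K d) :
    dMv j (x * y) = dMv j x * y + x * dMv j y := by
  refine leibniz_aux _ (fun n m a b => ?_) x y
  rw [AddMonoidAlgebra.single_mul_single, dMv_single dMv hdMv, dMv_single dMv hdMv,
    dMv_single dMv hdMv, smul_mul_assoc, mul_smul_comm, AddMonoidAlgebra.single_mul_single,
    AddMonoidAlgebra.single_mul_single, cast_add_apply, add_smul,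
    show n - Pi.single j 1 + m = n + m - Pi.single j 1 by abel,
    show n + (m - Pi.single j 1) = n + m - Pi.single j 1 by abel]

lemma theta_single (j : Fin d) (m : Fin d → ℤ) (c : K) :
    (mvT K d j * dMv j) (AddMonoidAlgebra.single m c) =
      (m j : K) • AddMonoidAlgebra.single m c := by
  rw [Module.End.mul_apply, dMv_single dMv hdMv, map_smul, mvT_single,
    show Pi.single j 1 + (m - Pi.single j 1) = m by abel]

lemma leibniz_t (j : Fin d) (x y : MvLaurent K d) :
    (mvT K d j * dMv j) (x * y) =
      (mvT K d j * dMv j) x * y + x * (mvT K d j * dMv j) y := by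
  refine leibniz_aux _ (fun n m a b => ?_) x y
  rw [AddMonoidAlgebra.single_mul_single, theta_single dMv hdMv, theta_single dMv hdMv,
    theta_single dMv hdMv, smul_mul_assoc, mul_smul_comm, AddMonoidAlgebra.single_mul_single,
    cast_add_apply, add_smul]

end withD

lemma prod_single (t : Finset (Fin d)) (f : Fin d → (Fin d → ℤ)) :
    (∏ i ∈ t, (AddMonoidAlgebra.single (f i) (1 : K) : MvLaurent K d)) =
      AddMonoidAlgebra.single (∑ i ∈ t, f i) 1 := by
  classical
  induction t using Finset.induction with
  | empty => simp [AddMonoidAlgebra.one_def]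
  | insert _ _ h ih =>
    rw [Finset.prod_insert h, Finset.sum_insert h, ih, AddMonoidAlgebra.single_mul_single, one_mul]

lemma embed_monomial (a : Fin d →₀ ℕ) (c : K) :
    mvEmbed K d (monomial a c) = AddMonoidAlgebra.single (fun i => (a i : ℤ)) c := by
  classical
  rw [mvEmbed, aeval_monomial, Finsupp.prod]
  simp_rw [AddMonoidAlgebra.single_pow, one_pow]
  rw [prod_single, ← Algebra.smul_def, AddMonoidAlgebra.smul_single', mul_one]
  congr 1
  funext j
  rw [Finset.sum_apply]
  simp only [Pi.smul_apply, Pi.single_apply, smul_eq_mul]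
  rw [Finset.sum_congr rfl (fun i _ => by
    show (a i : ℕ) • (if j = i then (1:ℤ) else 0) = if j = i then (a i : ℤ) else 0
    by_cases h : j = i <;> simp [h])]
  rw [Finset.sum_ite_eq a.support j (fun i => (a i : ℤ))]
  by_cases h : j ∈ a.support
  · simp [h]
  · simp only [h, if_neg]
    simp only [Finsupp.mem_support_iff, not_not] at h
    simp [h]

section withD2

variable (dMv : Fin d → Module.End K (MvLaurent K d))
  (hdMv : ∀ (i : Fin d) (m : Fin d → ℤ),
      dMv i (AddMonoidAlgebra.single m (1 : K)) =
        (m i : K) • AddMonoidAlgebra.single (m - Pi.single i 1) (1 : K))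

include hdMv

lemma dMv_embed (j : Fin d) (p : MvPolynomial (Fin d) K) :
    dMv j (mvEmbed K d p) = mvEmbed K d (pderiv j p) := by
  classical
  induction p using MvPolynomial.induction_on' with
  | add p q hp hq => rw [map_add, map_add, map_add, hp, hq, map_add]
  | monomial a c =>
    rw [embed_monomial, dMv_single dMv hdMv, pderiv_monomial, embed_monomial]
    by_cases h : a j = 0
    · simp [h]
    · rw [AddMonoidAlgebra.smul_single']
      congr 1
      · funext k
        rcases eq_or_ne k j with rfl | hk
        · have h1 : 1 ≤ a k := Nat.one_le_iff_ne_zero.2 h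
          simp [Finsupp.single_apply, Pi.single_apply, Nat.cast_sub h1]
        · simp [Finsupp.single_apply, Pi.single_apply, hk, Ne.symm hk]
      · push_cast
        ring

lemma theta_embed (j : Fin d) (p : MvPolynomial (Fin d) K) :
    (mvT K d j * dMv j) (mvEmbed K d p) = mvEmbed K d (X j * pderiv j p) := by
  rw [Module.End.mul_apply, dMv_embed dMv hdMv, map_mul, mvEmbed_X, mvT, LinearMap.mulLeft_apply]

lemma comm_d (j : Fin d) (q : MvPolynomial (Fin d) K) :
    dMv j * Lop K d q = Lop K d (pderiv j q) + Lop K d q * dMv j := by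
  refine LinearMap.ext fun x => ?_
  show dMv j (Lop K d q x) = (Lop K d (pderiv j q)) x + (Lop K d q) (dMv j x)
  rw [Lop_apply, Lop_apply, Lop_apply, leibniz_d dMv hdMv j _ x, dMv_embed dMv hdMv]

lemma comm_t (j : Fin d) (q : MvPolynomial (Fin d) K) :
    (mvT K d j * dMv j) * Lop K d q =
      Lop K d (X j * pderiv j q) + Lop K d q * (mvT K d j * dMv j) := by
  refine LinearMap.ext fun x => ?_
  show (mvT K d j * dMv j) (Lop K d q x)
      = (Lop K d (X j * pderiv j q)) x + (Lop K d q) ((mvT K d j * dMv j) x)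
  rw [Lop_apply, Lop_apply, Lop_apply, leibniz_t dMv hdMv j _ x, theta_embed dMv hdMv]

end withD2

end Aux

/-- **Presentation of `A(Z)` over the logarithmic differential operators.**
Let `K` be a field of characteristic `0`, `A = K[t₁,…,t_d]`, `s ≤ d`, and let `∂_i`
denote the partial derivatives (realized on the Laurent ring, characterized by their
values on monomials).  Let `D^#` be the ring of logarithmic differential operators
generated over `A` by `θ_i = t_i∂_i` for `i < s` and by `∂_i` for `i ≥ s`, and let
`A(Z) = (1/(t₁⋯t_s))·A`.  Then the map `P ↦ P·(1/(t₁⋯t_s))` from `D^#`: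
* is surjective onto `A(Z)`, and
* has kernel exactly the left ideal generated by `θ_1+1, …, θ_s+1, ∂_{s+1}, …, ∂_d`
  (where `−θ_i−1 = ᵗθ_i` is the transpose of `θ_i`);
i.e. `D^#/D^#·(θ₁+1,…,θ_s+1,∂_{s+1},…,∂_d) ≅ A(Z)` as left `D^#`-modules. -/
theorem log_diffops_presentation_of_twist (K : Type*) [Field K] [CharZero K]
    (d s : ℕ) (hs : s ≤ d)
    (dMv : Fin d → Module.End K (MvLaurent K d))
    (hdMv : ∀ (i : Fin d) (m : Fin d → ℤ),
      dMv i (AddMonoidAlgebra.single m (1 : K)) =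
        (m i : K) • AddMonoidAlgebra.single (m - Pi.single i 1) (1 : K)) :
    (∀ p : MvPolynomial (Fin d) K,
      ∃ P ∈ Algebra.adjoin K
          (Set.range (mvT K d) ∪
            Set.range (fun i : Fin d =>
              if (i : ℕ) < s then mvT K d i * dMv i else dMv i)),
        P (AddMonoidAlgebra.single (poleExp d s) (1 : K)) =
          mvEmbed K d p * AddMonoidAlgebra.single (poleExp d s) (1 : K)) ∧
    (∀ P ∈ Algebra.adjoin K
        (Set.range (mvT K d) ∪
          Set.range (fun i : Fin d =>
            if (i : ℕ) < s then mvT K d i * dMv i else dMv i)),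
      (P (AddMonoidAlgebra.single (poleExp d s) (1 : K)) = 0 ↔
        ∃ Q : Fin d → Module.End K (MvLaurent K d),
          (∀ i, Q i ∈ Algebra.adjoin K
            (Set.range (mvT K d) ∪
              Set.range (fun i : Fin d =>
                if (i : ℕ) < s then mvT K d i * dMv i else dMv i))) ∧
          P = ∑ i : Fin d,
            Q i * (if (i : ℕ) < s then mvT K d i * dMv i + 1 else dMv i))) := by
  classical
  set gset : Set (Module.End K (MvLaurent K d)) :=
    Set.range (mvT K d) ∪ Set.range (fun i : Fin d =>
      if (i : ℕ) < s then mvT K d i * dMv i else dMv i) with hgset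
  have hEδ : ∀ i : Fin d,
      (if (i : ℕ) < s then mvT K d i * dMv i + 1 else dMv i)
        (AddMonoidAlgebra.single (poleExp d s) (1 : K)) = 0 := by
    intro i
    by_cases hi : (i : ℕ) < s
    · rw [if_pos hi, LinearMap.add_apply, Module.End.one_apply, theta_single dMv hdMv]
      have h1 : poleExp d s i = -1 := if_pos hi
      rw [h1]
      simp
    · rw [if_neg hi, dMv_single dMv hdMv]
      have h1 : poleExp d s i = 0 := if_neg hi
      rw [h1]
      simp
  have hδu : ∀ y : MvLaurent K d,
      y * AddMonoidAlgebra.single (poleExp d s) (1 : K) = 0 → y = 0 := by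
    intro y hy
    have h2 := congrArg (· * AddMonoidAlgebra.single (-(poleExp d s)) (1 : K)) hy
    simp only [zero_mul] at h2
    rwa [mul_assoc, AddMonoidAlgebra.single_mul_single, add_neg_cancel, one_mul,
      ← AddMonoidAlgebra.one_def, mul_one] at h2
  have key : ∀ P ∈ Algebra.adjoin K gset, ∀ q : MvPolynomial (Fin d) K,
      ∃ Q : Fin d → Module.End K (MvLaurent K d),
        (∀ i, Q i ∈ Algebra.adjoin K gset) ∧
        ∃ r : MvPolynomial (Fin d) K,
          P * Lop K d q = (∑ i : Fin d, Q i *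
            (if (i : ℕ) < s then mvT K d i * dMv i + 1 else dMv i)) + Lop K d r := by
    intro P hP
    induction hP using Algebra.adjoin_induction with
    | mem x hx =>
      intro q
      rcases hx with ⟨j, rfl⟩ | ⟨j, rfl⟩
      · refine ⟨fun _ => 0, fun i => zero_mem _, X j * q, ?_⟩
        rw [map_mul, Lop_X]
        simp
      · by_cases hj : (j : ℕ) < s
        · refine ⟨fun i => if i = j then Lop K d q else 0, fun i => ?_,
            X j * pderiv j q - q, ?_⟩
          · beta_reduce
            by_cases h : i = j
            · rw [if_pos h]; exact Lop_mem _ _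
            · rw [if_neg h]; exact zero_mem _
          · beta_reduce
            rw [if_pos hj]
            rw [comm_t dMv hdMv j q, map_sub]
            rw [Finset.sum_eq_single_of_mem j (Finset.mem_univ j)
              (fun b _ hb => by rw [if_neg hb, zero_mul]), if_pos rfl, if_pos hj]
            rw [mul_add, mul_one]
            abel
        · refine ⟨fun i => if i = j then Lop K d q else 0, fun i => ?_,
            pderiv j q, ?_⟩
          · beta_reduce
            by_cases h : i = j
            · rw [if_pos h]; exact Lop_mem _ _
            · rw [if_neg h]; exact zero_mem _
          · beta_reduce
            rw [if_neg hj]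
            rw [comm_d dMv hdMv j q]
            rw [Finset.sum_eq_single_of_mem j (Finset.mem_univ j)
              (fun b _ hb => by rw [if_neg hb, zero_mul]), if_pos rfl, if_neg hj]
            abel
    | algebraMap r =>
      intro q
      refine ⟨fun _ => 0, fun i => zero_mem _, C r * q, ?_⟩
      have hC : Lop K d (C r) = algebraMap K (Module.End K (MvLaurent K d)) r := by
        rw [← MvPolynomial.algebraMap_eq, AlgHom.commutes]
      rw [map_mul, hC]
      simp
    | add x y hx hy ihx ihy =>
      intro q
      obtain ⟨Qx, hQx, rx, hrx⟩ := ihx q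
      obtain ⟨Qy, hQy, ry, hry⟩ := ihy q
      refine ⟨fun i => Qx i + Qy i, fun i => add_mem (hQx i) (hQy i), rx + ry, ?_⟩
      rw [add_mul, hrx, hry, map_add]
      simp only [add_mul]
      rw [Finset.sum_add_distrib]
      abel
    | mul x y hx hy ihx ihy =>
      intro q
      obtain ⟨Qy, hQy, r1, hr1⟩ := ihy q
      obtain ⟨Qx, hQx, r2, hr2⟩ := ihx r1
      refine ⟨fun i => x * Qy i + Qx i,
        fun i => add_mem (mul_mem hx (hQy i)) (hQx i), r2, ?_⟩
      rw [mul_assoc, hr1, mul_add, hr2, Finset.mul_sum]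
      simp only [add_mul, mul_assoc]
      rw [Finset.sum_add_distrib]
      abel
  refine ⟨?_, ?_⟩
  · intro p
    exact ⟨Lop K d p, Lop_mem _ p, Lop_apply p _⟩
  · intro P hP
    constructor
    · intro hPδ
      obtain ⟨Q, hQ, r, hr⟩ := key P hP 1
      rw [map_one, mul_one] at hr
      have hsum0 : (∑ i : Fin d, Q i *
          (if (i : ℕ) < s then mvT K d i * dMv i + 1 else dMv i))
            (AddMonoidAlgebra.single (poleExp d s) (1 : K)) = 0 := by
        rw [LinearMap.sum_apply]
        refine Finset.sum_eq_zero fun i _ => ?_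
        rw [Module.End.mul_apply, hEδ i, map_zero]
      have hδ0 : Lop K d r (AddMonoidAlgebra.single (poleExp d s) (1 : K)) = 0 := by
        have h2 := congrArg (fun f : Module.End K (MvLaurent K d) =>
          f (AddMonoidAlgebra.single (poleExp d s) (1 : K))) hr
        simp only [LinearMap.add_apply] at h2
        rw [hPδ, hsum0, zero_add] at h2
        exact h2.symm
      rw [Lop_apply] at hδ0
      have hL0 : Lop K d r = 0 := by
        rw [Lop, AlgHom.comp_apply, hδu _ hδ0, map_zero]
      exact ⟨Q, hQ, by rw [hr, hL0, add_zero]⟩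
    · rintro ⟨Q, hQ, rfl⟩
      rw [LinearMap.sum_apply]
      refine Finset.sum_eq_zero fun i _ => ?_
      rw [Module.End.mul_apply, hEδ i, map_zero]
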